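/- For every unit vector ψ in ℂ², there exists a real orthogonal 2×2 matrix O (i.e., O has real entries and O·Oᵀ = I) such that O|ψ⟩⟨ψ|Oᵀ equals the canonical density matrix ρ_A = [[(1+A)/2, −(i/2)√(1−A²)], [(i/2)√(1−A²), (1−A)/2]], where A = |⟨ψ*|ψ⟩| = |ψ₀² + ψ₁²| is the modulus of the sum of squares of the components of ψ. -/

import Mathlib

open Matrix Kronecker BigOperators
open scoped ComplexOrder

noncomputable section

/-- A density matrix: positive semidefinite with trace 1. -/
def IsDensityMatrix {n : Type*} [Fintype n] [DecidableEq n] (ρ : Matrix n n ℂ) : Prop :=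
  ρ.PosSemidef ∧ ρ.trace = 1

/-- The l₁-norm imaginarity measure: sum of |Im ρᵢⱼ| over off-diagonal entries. -/
noncomputable def Fl1 {n : Type*} [Fintype n] [DecidableEq n] (ρ : Matrix n n ℂ) : ℝ :=
  ∑ i, ∑ j, if i = j then 0 else |(ρ i j).im|

/-- The trace norm ‖M‖₁ = Tr √(M†M). -/
noncomputable def traceNorm {n : Type*} [Fintype n] [DecidableEq n] (M : Matrix n n ℂ) : ℝ :=
  ((((Matrix.posSemidef_conjTranspose_mul_self M).1.eigenvectorUnitary : Matrix n n ℂ) *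
    diagonal (((↑) : ℝ → ℂ) ∘ (√·) ∘
      (Matrix.posSemidef_conjTranspose_mul_self M).1.eigenvalues) *
    (star (Matrix.posSemidef_conjTranspose_mul_self M).1.eigenvectorUnitary : Matrix n n ℂ)).trace).re

/-- The robustness of imaginarity: (1/2)‖ρ − ρᵀ‖₁. -/
noncomputable def FR {n : Type*} [Fintype n] [DecidableEq n] (ρ : Matrix n n ℂ) : ℝ :=
  traceNorm (ρ - ρᵀ) / 2

/-- Von Neumann entropy (base-2), via eigenvalues of a Hermitian matrix
(junk value 0 if not Hermitian). -/
noncomputable def vnEntropy {n : Type*} [Fintype n] [DecidableEq n] (σ : Matrix n n ℂ) : ℝ :=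
  if h : σ.IsHermitian then -∑ j, (h.eigenvalues j) * Real.logb 2 (h.eigenvalues j) else 0

/-- The relative entropy of imaginarity: S(Re ρ) − S(ρ), Re ρ = (ρ + ρᵀ)/2. -/
noncomputable def Fr {n : Type*} [Fintype n] [DecidableEq n] (ρ : Matrix n n ℂ) : ℝ :=
  vnEntropy ((1/2 : ℂ) • (ρ + ρᵀ)) - vnEntropy ρ

/-- The canonical single-qubit state ρ_A. -/
noncomputable def rhoA (A : ℝ) : Matrix (Fin 2) (Fin 2) ℂ :=
  !![(((1 + A) / 2 : ℝ) : ℂ), -(Complex.I / 2) * (Real.sqrt (1 - A ^ 2) : ℂ);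
     (Complex.I / 2) * (Real.sqrt (1 - A ^ 2) : ℂ), (((1 - A) / 2 : ℝ) : ℂ)]

/-- Density matrix of the maximal imaginary state |+⟩ = (|0⟩ + i|1⟩)/√2. -/
noncomputable def Mplus : Matrix (Fin 2) (Fin 2) ℂ :=
  (1/2 : ℂ) • !![1, -Complex.I; Complex.I, 1]

set_option maxHeartbeats 1000000 in
/-- every unit vector ψ ∈ ℂ² can be brought to the canonical form ρ_A,
A = |ψ₀² + ψ₁²|, by conjugation with a real orthogonal matrix. -/
theorem exists_real_orthogonal_to_canonical (ψ : Fin 2 → ℂ)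
    (hψ : ∑ j, ‖ψ j‖ ^ 2 = 1) :
    ∃ O : Matrix (Fin 2) (Fin 2) ℂ,
      (∀ i j, (O i j).im = 0) ∧ O * Oᵀ = 1 ∧
      O * (Matrix.of fun i j => ψ i * (starRingEnd ℂ) (ψ j)) * Oᵀ
        = rhoA (‖ψ 0 ^ 2 + ψ 1 ^ 2‖) := by
  have hψ2 : ‖ψ 0‖ ^ 2 + ‖ψ 1‖ ^ 2 = 1 := by
    simpa [Fin.sum_univ_two] using hψ
  set A : ℝ := ‖ψ 0 ^ 2 + ψ 1 ^ 2‖ with hAdef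
  have hA0 : 0 ≤ A := norm_nonneg _
  have hA1 : A ≤ 1 := by
    calc A ≤ ‖ψ 0 ^ 2‖ + ‖ψ 1 ^ 2‖ := norm_add_le _ _
    _ = 1 := by rw [norm_pow, norm_pow]; exact hψ2
  -- choose a phase c with c^2 * (ψ0^2 + ψ1^2) = A and |c| = 1
  obtain ⟨c, hc, hcc⟩ : ∃ c : ℂ, c ^ 2 * (ψ 0 ^ 2 + ψ 1 ^ 2) = (A : ℂ) ∧
      c * (starRingEnd ℂ) c = 1 := by
    by_cases hz : ψ 0 ^ 2 + ψ 1 ^ 2 = 0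
    · refine ⟨1, ?_, by simp⟩
      simp [hAdef, hz]
    · obtain ⟨c, hc⟩ := IsAlgClosed.exists_pow_nat_eq ((A : ℂ) / (ψ 0 ^ 2 + ψ 1 ^ 2)) zero_lt_two
      have hA0' : A ≠ 0 := by simpa [hAdef] using hz
      refine ⟨c, by rw [hc]; exact div_mul_cancel₀ _ hz, ?_⟩
      have habs : ‖c‖ ^ 2 = 1 := by
        have := congrArg norm hc
        rw [norm_pow, norm_div] at this
        rw [this]
        simp [hz, hAdef, Complex.norm_real, abs_of_nonneg hA0, div_self hA0']
      rw [Complex.mul_conj]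
      have : Complex.normSq c = 1 := by rw [← Complex.sq_norm]; exact habs
      exact_mod_cast this
  set χ : Fin 2 → ℂ := fun j => c * ψ j with hχdef
  set u : Fin 2 → ℝ := fun j => (χ j).re with hudef
  set v : Fin 2 → ℝ := fun j => (χ j).im with hvdef
  have hχ : ∀ j, χ j = (u j : ℂ) + (v j : ℂ) * Complex.I := fun j =>
    (Complex.re_add_im _).symm
  -- norms preserved
  have hnorm : ∀ j, u j ^ 2 + v j ^ 2 = ‖ψ j‖ ^ 2 := by
    intro j
    have : Complex.normSq (χ j) = Complex.normSq c * Complex.normSq (ψ j) := by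
      simp [hχdef, Complex.normSq_mul]
    have hc1 : Complex.normSq c = 1 := by
      have := hcc; rw [Complex.mul_conj] at this; exact_mod_cast this
    have hc1' : Complex.normSq (χ j) = Complex.normSq (ψ j) := by
      rw [this, hc1, one_mul]
    calc u j ^ 2 + v j ^ 2 = Complex.normSq (χ j) := by
          rw [Complex.normSq_apply, hudef, hvdef]; ring
      _ = Complex.normSq (ψ j) := hc1'
      _ = ‖ψ j‖ ^ 2 := (Complex.sq_norm _).symm
  have h1 : u 0 ^ 2 + v 0 ^ 2 + u 1 ^ 2 + v 1 ^ 2 = 1 := by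
    linarith [hnorm 0, hnorm 1, hψ2]
  have hzχ : χ 0 ^ 2 + χ 1 ^ 2 = (A : ℂ) := by
    simp only [hχdef]; linear_combination hc
  have hzuv : ((u 0 : ℂ) + (v 0 : ℂ) * Complex.I) ^ 2 + ((u 1 : ℂ) + (v 1 : ℂ) * Complex.I) ^ 2 = (A : ℂ) := by
    rw [← hχ 0, ← hχ 1]; exact hzχ
  have hre : u 0 ^ 2 - v 0 ^ 2 + u 1 ^ 2 - v 1 ^ 2 = A := by
    have := congrArg Complex.re hzuv
    simp [Complex.add_re, Complex.mul_re, Complex.mul_im, pow_two] at this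
    linarith
  have hperp : u 0 * v 0 + u 1 * v 1 = 0 := by
    have := congrArg Complex.im hzuv
    simp [Complex.add_im, Complex.mul_re, Complex.mul_im, pow_two] at this
    linarith
  have hu : u 0 ^ 2 + u 1 ^ 2 = (1 + A) / 2 := by linarith
  have hv : v 0 ^ 2 + v 1 ^ 2 = (1 - A) / 2 := by linarith
  set r : ℝ := Real.sqrt ((1 + A) / 2) with hrdef
  set s : ℝ := Real.sqrt ((1 - A) / 2) with hsdef
  have hr2 : r ^ 2 = (1 + A) / 2 := Real.sq_sqrt (by linarith)
  have hs2 : s ^ 2 = (1 - A) / 2 := Real.sq_sqrt (by linarith)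
  have hrpos : 0 < r := Real.sqrt_pos.mpr (by linarith)
  have hsnn : 0 ≤ s := Real.sqrt_nonneg _
  have hrs : r * s = Real.sqrt (1 - A ^ 2) / 2 := by
    rw [hrdef, hsdef, ← Real.sqrt_mul (by linarith)]
    rw [show (1 + A) / 2 * ((1 - A) / 2) = (1 - A ^ 2) / 4 by ring]
    rw [show (1 - A ^ 2) / 4 = (1 - A ^ 2) * (1/4 : ℝ) by ring]
    rw [Real.sqrt_mul (by nlinarith)]
    rw [show Real.sqrt (1/4 : ℝ) = 1/2 by
      rw [show (1/4 : ℝ) = (1/2)^2 by norm_num, Real.sqrt_sq (by norm_num)]]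
    ring
  set D : ℝ := u 0 * v 1 - u 1 * v 0 with hDdef
  have hD2 : D ^ 2 = (r * s) ^ 2 := by
    have key : D ^ 2 + (u 0 * v 0 + u 1 * v 1) ^ 2
        = (u 0 ^ 2 + u 1 ^ 2) * (v 0 ^ 2 + v 1 ^ 2) := by ring
    rw [hperp] at key
    rw [mul_pow, hr2, hs2]
    linear_combination key + (v 0 ^ 2 + v 1 ^ 2) * hu + ((1 + A) / 2) * hv
  set ε : ℝ := if D < 0 then -1 else 1 with hεdef
  have hε2 : ε ^ 2 = 1 := by rw [hεdef]; split <;> norm_num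
  have hεD : ε * D = r * s := by
    have habsD : |D| = r * s := by
      rw [← Real.sqrt_sq_eq_abs, hD2, Real.sqrt_sq (by positivity)]
    rw [hεdef]
    rcases lt_or_ge D 0 with h | h
    · rw [if_pos h, ← habsD, abs_of_neg h]; ring
    · rw [if_neg (not_lt.mpr h), ← habsD, abs_of_nonneg h]; ring
  -- the orthogonal matrix
  set O : Matrix (Fin 2) (Fin 2) ℂ :=
    !![((u 0 / r : ℝ) : ℂ), ((u 1 / r : ℝ) : ℂ);
       ((-(ε * u 1) / r : ℝ) : ℂ), ((ε * u 0 / r : ℝ) : ℂ)] with hOdef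
  have hr0 : (r : ℂ) ≠ 0 := by exact_mod_cast hrpos.ne'
  -- row actions
  have e0 : ((u 0 / r : ℝ) : ℂ) * χ 0 + ((u 1 / r : ℝ) : ℂ) * χ 1 = (r : ℂ) := by
    rw [hχ 0, hχ 1]
    push_cast
    field_simp
    apply Complex.ext <;> simp [Complex.add_re, Complex.add_im, Complex.mul_re, Complex.mul_im, pow_two]
    · linear_combination hu - hr2
    · linarith [hperp]
  have e1 : ((-(ε * u 1) / r : ℝ) : ℂ) * χ 0 + ((ε * u 0 / r : ℝ) : ℂ) * χ 1
      = Complex.I * (s : ℂ) := by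
    rw [hχ 0, hχ 1]
    push_cast
    field_simp
    apply Complex.ext <;>
      simp [Complex.add_re, Complex.add_im, Complex.mul_re, Complex.mul_im]
    · right; ring
    · linear_combination hεD
  have ce0 : ((u 0 / r : ℝ) : ℂ) * (starRingEnd ℂ) (χ 0)
      + ((u 1 / r : ℝ) : ℂ) * (starRingEnd ℂ) (χ 1) = (r : ℂ) := by
    have := congrArg (starRingEnd ℂ) e0
    simpa [map_add, _root_.map_mul, Complex.conj_ofReal] using this
  have ce1 : ((-(ε * u 1) / r : ℝ) : ℂ) * (starRingEnd ℂ) (χ 0)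
      + ((ε * u 0 / r : ℝ) : ℂ) * (starRingEnd ℂ) (χ 1) = -Complex.I * (s : ℂ) := by
    have := congrArg (starRingEnd ℂ) e1
    simpa [map_add, _root_.map_mul, Complex.conj_ofReal] using this
  have hr2C : (r : ℂ) * r = (((1 + A) / 2 : ℝ) : ℂ) := by
    rw [← Complex.ofReal_mul]; norm_cast; linear_combination hr2
  have hs2C : (s : ℂ) * s = (((1 - A) / 2 : ℝ) : ℂ) := by
    rw [← Complex.ofReal_mul]; norm_cast; linear_combination hs2
  have hrsC : (r : ℂ) * s = (Real.sqrt (1 - A ^ 2) : ℂ) / 2 := by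
    rw [← Complex.ofReal_mul, hrs]; push_cast; ring
  refine ⟨O, ?_, ?_, ?_⟩
  · intro i j
    fin_cases i <;> fin_cases j <;> simp [hOdef]
  · ext i j
    fin_cases i <;> fin_cases j <;>
      simp only [hOdef, Matrix.mul_apply, Fin.sum_univ_two, Matrix.transpose_apply,
        Matrix.cons_val', Matrix.cons_val_zero, Matrix.cons_val_one, Matrix.head_cons,
        Matrix.empty_val', Matrix.cons_val_fin_one, Matrix.head_fin_const, Fin.isValue,
        Fin.mk_zero, Fin.mk_one, Matrix.one_apply_eq, Matrix.one_apply, Fin.zero_eq_one_iff,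
        Fin.one_eq_zero_iff, if_true, if_false] <;>
      norm_num <;> norm_cast
    · field_simp
      linear_combination hu - hr2
    · field_simp
      ring
    · field_simp
      ring
    · field_simp
      linear_combination (u 0 ^ 2 + u 1 ^ 2) * hε2 + hu - hr2
  · have hM : (Matrix.of fun i j => ψ i * (starRingEnd ℂ) (ψ j))
        = Matrix.of fun i j => χ i * (starRingEnd ℂ) (χ j) := by
      ext i j
      simp only [Matrix.of_apply, hχdef, _root_.map_mul]
      linear_combination -(ψ i * (starRingEnd ℂ) (ψ j)) * hcc
    rw [hM]
    ext i j
    fin_cases i <;> fin_cases j <;>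
      simp only [hOdef, rhoA, Matrix.mul_apply, Fin.sum_univ_two, Matrix.transpose_apply,
        Matrix.of_apply, Matrix.cons_val', Matrix.cons_val_zero, Matrix.cons_val_one,
        Matrix.head_cons, Matrix.empty_val', Matrix.cons_val_fin_one, Matrix.head_fin_const,
        Fin.isValue, Fin.mk_zero, Fin.mk_one]
    · linear_combination
        (((u 0 / r : ℝ) : ℂ) * (starRingEnd ℂ) (χ 0)
          + ((u 1 / r : ℝ) : ℂ) * (starRingEnd ℂ) (χ 1)) * e0
        + (r : ℂ) * ce0 + hr2C
    · linear_combination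
        (((-(ε * u 1) / r : ℝ) : ℂ) * (starRingEnd ℂ) (χ 0)
          + ((ε * u 0 / r : ℝ) : ℂ) * (starRingEnd ℂ) (χ 1)) * e0
        + (r : ℂ) * ce1 + (-Complex.I) * hrsC
    · linear_combination
        (((u 0 / r : ℝ) : ℂ) * (starRingEnd ℂ) (χ 0)
          + ((u 1 / r : ℝ) : ℂ) * (starRingEnd ℂ) (χ 1)) * e1
        + (Complex.I * (s : ℂ)) * ce0 + Complex.I * hrsC
    · linear_combination
        (((-(ε * u 1) / r : ℝ) : ℂ) * (starRingEnd ℂ) (χ 0)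
          + ((ε * u 0 / r : ℝ) : ℂ) * (starRingEnd ℂ) (χ 1)) * e1
        + (Complex.I * (s : ℂ)) * ce1
        + (-((s : ℂ) * s)) * Complex.I_sq + hs2C
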